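/- Let d ≥ 2 and let n_1 ≥ n_2 ≥ n_3 ≥ n_4 be integers with 0 ≤ n_i ≤ d−1 for all i and n_1+n_2+n_3+n_4 = 2d−4. Then the coefficient of q^{d−1} in the power series (q·F(q) − 1/2)·U_{n_1}·U_{n_2}·U_{n_3}·U_{n_4} ∈ ℚ[[q]] equals min(d−n_1−1, n_4+1). (This is the generating-function form, via the dictionary of Lemma 4.11, of Lemma 4.12: the Grassmannian intersection number ∫_{Gr(2,d)} σ_{n_1}σ_{n_2}σ_{n_3}σ_{n_4} equals min(d−n_1−1, n_4+1); here q·F(q) − 1/2 is the power-series form of −(1/2)(1−4q)^{1/2} and U_{n_i} = s_{n_i}(α,β).) -/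

import Mathlib

/-- The generating function `F(q) = Σ_{n≥0} C_n q^n ∈ ℚ[[q]]` of the Catalan numbers. -/
noncomputable def catalanGF : PowerSeries ℚ := PowerSeries.mk fun n => (catalan n : ℚ)

/-- `U n ∈ ℚ[q]`: `U 0 = U 1 = 1`, `U (n+2) = U (n+1) − q·U n`;
equivalently `U n = (α^{n+1} − β^{n+1})/(α − β)` where `α, β` are the roots of `t² − t + q`. -/
noncomputable def U : ℕ → Polynomial ℚ
  | 0 => 1
  | 1 => 1
  | (n + 2) => U (n + 1) - Polynomial.X * U n

open PowerSeries

noncomputable def u (n : ℕ) : PowerSeries ℚ := ((U n : Polynomial ℚ) : PowerSeries ℚ)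

lemma u_zero : u 0 = 1 := by simp [u, U]
lemma u_one : u 1 = 1 := by simp [u, U]
lemma u_rec (n : ℕ) : u (n + 2) = u (n + 1) - X * u n := by
  simp [u, U, Polynomial.coe_sub, Polynomial.coe_mul, Polynomial.coe_X]

/-- product identity -/
lemma u_mul (a : ℕ) : ∀ b, u (a + 1) * u (b + 1) = u (a + b + 2) + X * (u a * u b) := by
  intro b
  induction b using Nat.twoStepInduction with
  | zero =>
    rw [u_one, u_zero, u_rec]
    ring
  | one =>
    have h2 : u 2 = 1 - X := by rw [u_rec 0, u_one, u_zero]; ring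
    rw [h2, u_one, u_rec (a+1), u_rec a]
    ring
  | more b ih2 ih1 =>
    rw [u_rec (b+1), mul_sub, ih1, show u (a+1) * (X * u (b+1)) = X * (u (a+1) * u (b+1)) from by ring, ih2,
      show a + (b + 2) + 2 = (a + b + 2) + 2 by ring, u_rec (a+b+2), u_rec b,
      show a + b + 2 + 1 = a + (b+1) + 2 by ring]
    ring

lemma catalanGF_eq : catalanGF = 1 + X * catalanGF ^ 2 := by
  ext n
  rw [map_add]
  cases n with
  | zero => simp [catalanGF]
  | succ n =>
    rw [coeff_succ_X_mul, sq, coeff_mul, coeff_one]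
    simp only [catalanGF, coeff_mk]
    rw [catalan_succ']
    push_cast
    simp

noncomputable def B : PowerSeries ℚ := X * catalanGF
noncomputable def A : PowerSeries ℚ := 1 - B
noncomputable def G : PowerSeries ℚ := X * catalanGF - C (R := ℚ) (1/2)

lemma B_sq : B ^ 2 = B - X := by
  have h : X * (X * catalanGF ^ 2) = X * (catalanGF - 1) := by
    conv_rhs => rw [catalanGF_eq]; ring_nf
    ring_nf
  calc B^2 = X * (X * catalanGF ^ 2) := by rw [B]; ring
  _ = X * (catalanGF - 1) := h
  _ = B - X := by rw [B]; ring

lemma A_sq : A ^ 2 = A - X := by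
  rw [A]; linear_combination B_sq

lemma C_half_two : (C (R := ℚ)) (1/2) * 2 = 1 := by
  rw [(map_ofNat (C (R := ℚ)) 2).symm, ← map_mul]
  norm_num

lemma G_eq : G = B - C (R := ℚ) (1/2) := rfl

lemma G_mul_u (k : ℕ) : G * u k = C (R := ℚ) (1/2) * (B ^ (k+1) - A ^ (k+1)) := by
  induction k using Nat.twoStepInduction with
  | zero =>
    rw [u_zero, mul_one, pow_one, pow_one, A, G_eq]
    linear_combination (-B) * C_half_two
  | one =>
    rw [u_one, mul_one, B_sq, A_sq, A, G_eq]
    linear_combination (-B) * C_half_two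
  | more k ih2 ih1 =>
    rw [u_rec k, mul_sub, ih1,
      show G * (X * u k) = X * (G * u k) from by ring, ih2]
    linear_combination (C (R := ℚ) (1/2)) * A^(k+1) * A_sq - (C (R := ℚ) (1/2)) * B^(k+1) * B_sq

noncomputable def Lp : ℕ → Polynomial ℚ
  | 0 => 2
  | 1 => 1
  | (n + 2) => Lp (n + 1) - Polynomial.X * Lp n

noncomputable def lq (n : ℕ) : PowerSeries ℚ := ((Lp n : Polynomial ℚ) : PowerSeries ℚ)

lemma lq_rec (n : ℕ) : lq (n + 2) = lq (n + 1) - X * lq n := by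
  simp [lq, Lp, Polynomial.coe_sub, Polynomial.coe_mul, Polynomial.coe_X]

lemma AB_pow (n : ℕ) : A ^ n + B ^ n = lq n := by
  induction n using Nat.twoStepInduction with
  | zero =>
    have h0 : Lp 0 = 1 + 1 := by norm_num [Lp]
    rw [lq, h0, Polynomial.coe_add, Polynomial.coe_one]
    norm_num
  | one =>
    have h1 : Lp 1 = 1 := by norm_num [Lp]
    rw [lq, h1, Polynomial.coe_one, pow_one, pow_one, A]
    ring
  | more n ih2 ih1 =>
    rw [lq_rec, ← ih1, ← ih2]
    linear_combination A^n * A_sq + B^n * B_sq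

lemma Lp_coeff : ∀ n i, n < 2*i → (Lp n).coeff i = 0 := by
  intro n
  induction n using Nat.twoStepInduction with
  | zero =>
    intro i hi
    have h0 : Lp 0 = Polynomial.C 2 := by
      rw [map_ofNat Polynomial.C 2]; norm_num [Lp]
    rw [h0, Polynomial.coeff_C, if_neg (by omega)]
  | one =>
    intro i hi
    have h1 : Lp 1 = Polynomial.C 1 := by simp [Lp]
    rw [h1, Polynomial.coeff_C, if_neg (by omega)]
  | more n ih2 ih1 =>
    intro i hi
    obtain ⟨j, rfl⟩ : ∃ j, i = j + 1 := ⟨i - 1, by omega⟩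
    have h2 : Lp (n+2) = Lp (n+1) - Polynomial.X * Lp n := by simp [Lp]
    rw [h2, Polynomial.coeff_sub, Polynomial.coeff_X_mul, ih1 _ (by omega),
      ih2 _ (by omega)]
    ring

lemma coeff_B_pow (j m : ℕ) (h : m < j) : coeff (R := ℚ) m (B ^ j) = 0 := by
  have hdvd : (X : ℚ⟦X⟧)^j ∣ B^j := pow_dvd_pow_of_dvd ⟨catalanGF, rfl⟩ j
  exact (X_pow_dvd_iff.mp hdvd) m h

lemma Gu2m (m : ℕ) (hm : 1 ≤ m) : coeff (R := ℚ) (m+1) (G * u (2*m)) = 0 := by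
  rw [G_mul_u, show A ^ (2*m+1) = lq (2*m+1) - B^(2*m+1) from by
    rw [← AB_pow]; ring]
  rw [show C (R := ℚ) (1/2) * (B^(2*m+1) - (lq (2*m+1) - B^(2*m+1)))
      = C (R := ℚ) (1/2) * B^(2*m+1) + C (R := ℚ) (1/2) * B^(2*m+1) - C (R := ℚ) (1/2) * lq (2*m+1) from by ring]
  rw [map_sub, map_add]
  simp only [coeff_C_mul]
  rw [lq, Polynomial.coeff_coe, Lp_coeff _ _ (by omega),
    coeff_B_pow (2*m+1) (m+1) (by omega)]
  ring

lemma Gu0 : coeff (R := ℚ) 1 (G * u 0) = 1 := by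
  rw [u_zero, mul_one, G, map_sub, coeff_succ_X_mul]
  simp [catalanGF]

lemma core : ∀ a m b, a + b = 2*m → coeff (R := ℚ) (m+1) (G * u a * u b) =
    if a = b then 1 else 0 := by
  intro a
  induction a with
  | zero =>
    intro m b h
    simp only [Nat.zero_add] at h
    subst h
    rw [u_zero, mul_one]
    cases m with
    | zero => simpa using Gu0
    | succ m => rw [Gu2m (m+1) (by omega), if_neg (by omega)]
  | succ a ih =>
    intro m b h
    cases b with
    | zero =>
      have hm : 1 ≤ m := by omega
      rw [u_zero, mul_one, show a + 1 = 2*m from by omega, Gu2m m hm,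
        if_neg (by omega)]
    | succ b =>
      obtain ⟨m', rfl⟩ : ∃ m', m = m' + 1 := ⟨m - 1, by omega⟩
      rw [mul_assoc, u_mul, mul_add,
        show G * (X * (u a * u b)) = X * (G * u a * u b) from by ring,
        map_add, coeff_succ_X_mul, show a + b + 2 = 2*(m'+1) from by omega,
        Gu2m (m'+1) (by omega), ih m' b (by omega)]
      simp only [Nat.add_right_cancel_iff, zero_add]

lemma pieri : ∀ b e, u (b + e) * u b = ∑ i ∈ Finset.range (b+1), X^(b-i) * u (e + 2*i) := by
  intro b
  induction b with
  | zero => intro e; simp [u_zero]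
  | succ b ih =>
    intro e
    rw [show b+1+e = (b+e)+1 from by ring, u_mul (b+e) b, ih, Finset.mul_sum]
    conv_rhs => rw [Finset.sum_range_succ]
    rw [add_comm]
    congr 1
    · apply Finset.sum_congr rfl
      intro i hi
      rw [Finset.mem_range] at hi
      rw [← mul_assoc, show b + 1 - i = (b - i) + 1 from by omega, pow_succ]
      ring
    · rw [Nat.sub_self, pow_zero, one_mul, show e + 2*(b+1) = b + e + b + 2 from by ring]

lemma inner_count (e1 e3 i n4 : ℕ) (hpar : e1 % 2 = e3 % 2) :
    (∑ j ∈ Finset.range (n4+1), (if e1 + 2*i = e3 + 2*j then (1:ℚ) else 0)) =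
      if e3 ≤ e1 + 2*i ∧ e1 + 2*i ≤ e3 + 2*n4 then 1 else 0 := by
  by_cases hc : e3 ≤ e1 + 2*i ∧ e1 + 2*i ≤ e3 + 2*n4
  · rw [if_pos hc]
    have hj0 : (e1 + 2*i - e3)/2 ∈ Finset.range (n4+1) := by
      rw [Finset.mem_range]; omega
    rw [Finset.sum_eq_single_of_mem _ hj0]
    · rw [if_pos (by omega)]
    · intro j hj hne
      rw [if_neg (by omega)]
  · rw [if_neg hc, Finset.sum_eq_zero]
    intro j hj
    rw [Finset.mem_range] at hj
    rw [if_neg (by omega)]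

lemma outer_count (e1 e3 n2 n4 : ℕ) :
    (∑ i ∈ Finset.range (n2+1),
      (if e3 ≤ e1 + 2*i ∧ e1 + 2*i ≤ e3 + 2*n4 then (1:ℚ) else 0)) =
      ((min (n2+1) ((e3 + 2*n4 + 2 - e1)/2) - (e3 - e1 + 1)/2 : ℕ) : ℚ) := by
  rw [Finset.sum_boole]
  norm_num
  rw [show min (n2+1) ((e3 + 2*n4 + 2 - e1)/2) - (e3 - e1 + 1)/2
      = (Finset.Ico ((e3 - e1 + 1)/2) (min (n2+1) ((e3 + 2*n4 + 2 - e1)/2))).card from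
    (Nat.card_Ico _ _).symm]
  congr 1
  ext i
  simp only [Finset.mem_filter, Finset.mem_range, Finset.mem_Ico, lt_min_iff]
  omega

/-- Lemma 4.12 in generating-function form: for `d ≥ 2` and
`n_1 ≥ n_2 ≥ n_3 ≥ n_4 ≥ 0` with `n_i ≤ d−1` and `n_1+n_2+n_3+n_4 = 2d−4`, the
coefficient of `q^{d−1}` in `(q·F(q) − 1/2)·U_{n_1}·U_{n_2}·U_{n_3}·U_{n_4}` equals
`min(d−n_1−1, n_4+1)`, the intersection number `∫_{Gr(2,d)} σ_{n_1}σ_{n_2}σ_{n_3}σ_{n_4}`. -/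
theorem integral_fourfold_product (d n1 n2 n3 n4 : ℕ) (hd : 2 ≤ d)
    (h12 : n2 ≤ n1) (h23 : n3 ≤ n2) (h34 : n4 ≤ n3) (h1d : n1 ≤ d - 1)
    (hsum : n1 + n2 + n3 + n4 = 2 * d - 4) :
    PowerSeries.coeff (R := ℚ) (d - 1)
        ((PowerSeries.X * catalanGF - PowerSeries.C (R := ℚ) (1/2)) *
          ((U n1 : Polynomial ℚ) : PowerSeries ℚ) * ((U n2 : Polynomial ℚ) : PowerSeries ℚ) *
          ((U n3 : Polynomial ℚ) : PowerSeries ℚ) * ((U n4 : Polynomial ℚ) : PowerSeries ℚ)) =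
      ((min (d - n1 - 1) (n4 + 1) : ℕ) : ℚ) := by
  obtain ⟨D, rfl⟩ : ∃ D, d = D + 2 := ⟨d - 2, by omega⟩
  obtain ⟨e1, rfl⟩ : ∃ e, n1 = n2 + e := ⟨n1 - n2, by omega⟩
  obtain ⟨e3, rfl⟩ : ∃ e, n3 = n4 + e := ⟨n3 - n4, by omega⟩
  have hD : n2 + e1 + n2 + (n4 + e3) + n4 = 2 * D := by omega
  have hpar : e1 % 2 = e3 % 2 := by omega
  have h1D : n2 + e1 ≤ D + 1 := by omega
  have key : (PowerSeries.X * catalanGF - PowerSeries.C (R := ℚ) (1/2)) *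
          ((U (n2+e1) : Polynomial ℚ) : PowerSeries ℚ) * ((U n2 : Polynomial ℚ) : PowerSeries ℚ) *
          ((U (n4+e3) : Polynomial ℚ) : PowerSeries ℚ) * ((U n4 : Polynomial ℚ) : PowerSeries ℚ)
      = G * ((u (n2 + e1) * u n2) * (u (n4 + e3) * u n4)) := by
    rw [G, u, u, u, u]; ring
  rw [key, show D + 2 - 1 = D + 1 from rfl]
  rw [pieri n2 e1, pieri n4 e3, Finset.sum_mul_sum, Finset.mul_sum, map_sum]
  have step : ∀ i ∈ Finset.range (n2+1), (PowerSeries.coeff (R := ℚ) (D+1))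
      (G * ∑ j ∈ Finset.range (n4+1),
        (X^(n2-i) * u (e1 + 2*i)) * (X^(n4-j) * u (e3 + 2*j))) =
      ∑ j ∈ Finset.range (n4+1), (if e1 + 2*i = e3 + 2*j then (1:ℚ) else 0) := by
    intro i hi
    rw [Finset.mem_range] at hi
    rw [Finset.mul_sum, map_sum]
    apply Finset.sum_congr rfl
    intro j hj
    rw [Finset.mem_range] at hj
    have hs : (n2-i) + (n4-j) ≤ D := by omega
    rw [show G * ((X^(n2-i) * u (e1 + 2*i)) * (X^(n4-j) * u (e3 + 2*j)))
        = X^((n2-i)+(n4-j)) * (G * u (e1 + 2*i) * u (e3 + 2*j)) from by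
      rw [pow_add]; ring]
    rw [show D + 1 = (D - ((n2-i)+(n4-j)) + 1) + ((n2-i)+(n4-j)) from by omega,
      PowerSeries.coeff_X_pow_mul,
      core (e1 + 2*i) (D - ((n2-i)+(n4-j))) (e3 + 2*j) (by omega)]
  rw [Finset.sum_congr rfl step]
  rw [Finset.sum_congr rfl (fun i hi => inner_count e1 e3 i n4 hpar)]
  rw [outer_count]
  have harith : min (n2+1) ((e3 + 2*n4 + 2 - e1)/2) - (e3 - e1 + 1)/2
      = min (D + 2 - (n2 + e1) - 1) (n4 + 1) := by omega
  rw [harith]
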